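/- Let G = (V,E) be a finite simple graph, S ⊆ V, and let x : E → ℝ be nonnegative edge lengths. Suppose (y,d) is sep-LP(x,S)-feasible and (f,g) is S-valid. Then ∑_{T ⊆ S, v ∈ T} g_{T,v}·(|T| − |S|/2) − ∑_{u,v ∈ V} ∑_{P ∈ 𝒫(u,v)} f^{uv}_P · ∑_{e ∈ E(P)} x_e ≤ ∑_{v ∈ V} y_v. In words: the flow objective of any S-valid pair (f,g) is at most the value ∑_v y_v of any sep-LP(x,S)-feasible pair (y,d). -/

import Mathlib

lemma indic_double {V : Type*} [Fintype V] [DecidableEq V] (T : Finset V) (h : V → V → ℝ) :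
    (∑ v ∈ T, ∑ u ∈ T, h u v) = ∑ u : V, ∑ v : V, if u ∈ T ∧ v ∈ T then h u v else 0 := by
  rw [Finset.sum_comm]
  calc (∑ u ∈ T, ∑ v ∈ T, h u v)
      = ∑ u : V, if u ∈ T then ∑ v ∈ T, h u v else 0 := by
        rw [Finset.sum_ite_mem, Finset.univ_inter]
    _ = ∑ u : V, ∑ v : V, if u ∈ T ∧ v ∈ T then h u v else 0 := by
        refine Finset.sum_congr rfl fun u _ => ?_
        by_cases hu : u ∈ T
        · simp [hu, Finset.sum_ite_mem]
        · simp [hu]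

lemma listsum_nodup {V : Type*} [Fintype V] [DecidableEq V] (y : V → ℝ) (l : List V)
    (h : l.Nodup) : (l.map y).sum = ∑ t : V, if t ∈ l then y t else 0 := by
  rw [← List.sum_toFinset y h]
  simp only [← List.mem_toFinset]
  rw [Finset.sum_ite_mem, Finset.univ_inter]


/-- `(y, d)` is a feasible solution to sep-LP(`x`, `S`). -/
def SepLPFeasible {V : Type*} [Fintype V] [DecidableEq V] (G : SimpleGraph V)
    (x : Sym2 V → ℝ) (S : Finset V) (y : V → ℝ) (d : V → V → ℝ) : Prop :=
  (∀ v, 0 ≤ y v) ∧ (∀ u v, 0 ≤ d u v) ∧ (∀ u v, d u v = d v u) ∧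
  (∀ (u v : V) (p : G.Walk u v), p.IsPath →
    d u v ≤ (p.edges.map x).sum + (p.support.map y).sum) ∧
  (∀ T ⊆ S, ∀ v ∈ T, (T.card : ℝ) - (S.card : ℝ) / 2 ≤ ∑ u ∈ T, d u v)

/-- `(f, g)` is `S`-valid: `f` assigns a nonnegative real to each unordered pair `u ≤ v`
and each simple path from `u` to `v`; `g` assigns a nonnegative real to each `T ⊆ S` and
`v ∈ T`; and the two families satisfy the two constraint families of flow-LP. -/
def SValid {V : Type*} [Fintype V] [LinearOrder V] (G : SimpleGraph V)
    [DecidableRel G.Adj] (S : Finset V)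
    (f : ∀ u v : V, G.Walk u v → ℝ) (g : Finset V → V → ℝ) : Prop :=
  (∀ (u v : V) (p : G.Walk u v), 0 ≤ f u v p) ∧ (∀ T v, 0 ≤ g T v) ∧
  (∀ u v : V, u ≤ v →
    ∑ T ∈ S.powerset.filter (fun T => u ∈ T ∧ v ∈ T), (g T u + g T v) ≤
      ∑ p : {p : G.Walk u v // p.IsPath}, f u v p.1) ∧
  (∀ t : V,
    ∑ u : V, ∑ v : V,
      (if u ≤ v then
        ∑ p : {p : G.Walk u v // p.IsPath}, (if t ∈ p.1.support then f u v p.1 else 0)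
       else 0) ≤ 1)

/-- The flow objective of `(f, g)` with respect to edge lengths `x`. -/
noncomputable def flowObj {V : Type*} [Fintype V] [LinearOrder V] (G : SimpleGraph V)
    [DecidableRel G.Adj] (S : Finset V) (x : Sym2 V → ℝ)
    (f : ∀ u v : V, G.Walk u v → ℝ) (g : Finset V → V → ℝ) : ℝ :=
  (∑ T ∈ S.powerset, ∑ v ∈ T, g T v * ((T.card : ℝ) - (S.card : ℝ) / 2)) -
    ∑ u : V, ∑ v : V,
      (if u ≤ v then
        ∑ p : {p : G.Walk u v // p.IsPath}, f u v p.1 * (p.1.edges.map x).sum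
       else 0)

/-- Weak duality direction of Lemma 6.4: the flow objective of any `S`-valid pair `(f, g)`
is at most the value `∑ v, y v` of any sep-LP(`x`,`S`)-feasible pair `(y, d)`. -/
theorem flow_le_sep
    {V : Type*} [Fintype V] [LinearOrder V] (G : SimpleGraph V) [DecidableRel G.Adj]
    (x : Sym2 V → ℝ) (hx : ∀ e, 0 ≤ x e) (S : Finset V)
    (y : V → ℝ) (d : V → V → ℝ) (hyd : SepLPFeasible G x S y d)
    (f : ∀ u v : V, G.Walk u v → ℝ) (g : Finset V → V → ℝ) (hfg : SValid G S f g) :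
    flowObj G S x f g ≤ ∑ v : V, y v := by
  classical
  obtain ⟨hy, hd, hdsymm, hpath, hsep⟩ := hyd
  obtain ⟨hf, hg, hcon1, hcon2⟩ := hfg
  rw [flowObj, sub_le_iff_le_add]
  -- N u v : the contribution of the (ordered) pair (u, v)
  set N : V → V → ℝ :=
    fun u v => ∑ T ∈ S.powerset.filter (fun T => u ∈ T ∧ v ∈ T), g T v * d u v with hN
  have hN0 : ∀ u v, 0 ≤ N u v := fun u v =>
    Finset.sum_nonneg fun T _ => mul_nonneg (hg T v) (hd u v)
  have hfilt : ∀ u v : V, S.powerset.filter (fun T => v ∈ T ∧ u ∈ T)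
      = S.powerset.filter (fun T => u ∈ T ∧ v ∈ T) := by
    intro u v
    exact Finset.filter_congr fun T _ => by rw [and_comm]
  -- Step 1
  have step1 : (∑ T ∈ S.powerset, ∑ v ∈ T, g T v * ((T.card : ℝ) - (S.card : ℝ) / 2))
      ≤ ∑ T ∈ S.powerset, ∑ v ∈ T, ∑ u ∈ T, g T v * d u v := by
    refine Finset.sum_le_sum fun T hT => Finset.sum_le_sum fun v hv => ?_
    rw [← Finset.mul_sum]
    exact mul_le_mul_of_nonneg_left (hsep T (Finset.mem_powerset.mp hT) v hv) (hg T v)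
  -- Step 2
  have step2 : (∑ T ∈ S.powerset, ∑ v ∈ T, ∑ u ∈ T, g T v * d u v)
      = ∑ u : V, ∑ v : V, N u v := by
    calc (∑ T ∈ S.powerset, ∑ v ∈ T, ∑ u ∈ T, g T v * d u v)
        = ∑ T ∈ S.powerset, ∑ u : V, ∑ v : V,
            if u ∈ T ∧ v ∈ T then g T v * d u v else 0 :=
          Finset.sum_congr rfl fun T _ => indic_double T _
      _ = ∑ u : V, ∑ T ∈ S.powerset, ∑ v : V,
            if u ∈ T ∧ v ∈ T then g T v * d u v else 0 := Finset.sum_comm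
      _ = ∑ u : V, ∑ v : V, ∑ T ∈ S.powerset,
            if u ∈ T ∧ v ∈ T then g T v * d u v else 0 :=
          Finset.sum_congr rfl fun u _ => Finset.sum_comm
      _ = ∑ u : V, ∑ v : V, N u v := by
          simp only [hN, Finset.sum_filter]
  -- Step 3 : symmetrize
  have step3 : (∑ u : V, ∑ v : V, N u v)
      ≤ ∑ u : V, ∑ v : V, if u ≤ v then N u v + N v u else 0 := by
    have hsplit : ∀ u v : V,
        N u v = (if u ≤ v then N u v else 0) + (if v < u then N u v else 0) := by
      intro u v
      rcases le_or_gt u v with h | h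
      · simp [h, not_lt.mpr h]
      · simp [h, not_le.mpr h]
    calc (∑ u : V, ∑ v : V, N u v)
        = (∑ u : V, ∑ v : V, if u ≤ v then N u v else 0)
          + ∑ u : V, ∑ v : V, if v < u then N u v else 0 := by
          simp only [← Finset.sum_add_distrib]
          exact Finset.sum_congr rfl fun u _ => Finset.sum_congr rfl fun v _ => hsplit u v
      _ = (∑ u : V, ∑ v : V, if u ≤ v then N u v else 0)
          + ∑ u : V, ∑ v : V, if u < v then N v u else 0 := by
          rw [Finset.sum_comm (f := fun u v => if v < u then N u v else 0)]
      _ ≤ (∑ u : V, ∑ v : V, if u ≤ v then N u v else 0)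
          + ∑ u : V, ∑ v : V, if u ≤ v then N v u else 0 := by
          refine add_le_add_right (Finset.sum_le_sum fun u _ =>
            Finset.sum_le_sum fun v _ => ?_) _
          by_cases h : u < v
          · simp [h, h.le]
          · by_cases h' : u ≤ v
            · simp [h, h', hN0]
            · simp [h, h']
      _ = ∑ u : V, ∑ v : V, if u ≤ v then N u v + N v u else 0 := by
          simp only [← Finset.sum_add_distrib]
          refine Finset.sum_congr rfl fun u _ => Finset.sum_congr rfl fun v _ => ?_
          split_ifs <;> simp
  -- Step 4 : bound the per-pair contribution by the path constraint
  have step4 : ∀ u v : V, u ≤ v → N u v + N v u ≤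
      ∑ p : {p : G.Walk u v // p.IsPath},
        f u v p.1 * ((p.1.edges.map x).sum + (p.1.support.map y).sum) := by
    intro u v huv
    have hNvu : N v u = ∑ T ∈ S.powerset.filter (fun T => u ∈ T ∧ v ∈ T),
        g T u * d u v := by
      rw [hN]
      simp only [hfilt u v, hdsymm v u]
    have h1 : N u v + N v u =
        (∑ T ∈ S.powerset.filter (fun T => u ∈ T ∧ v ∈ T), (g T u + g T v)) * d u v := by
      rw [hNvu]
      simp only [hN]
      rw [← Finset.sum_add_distrib, Finset.sum_mul]
      exact Finset.sum_congr rfl fun T _ => by ring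
    rw [h1]
    calc (∑ T ∈ S.powerset.filter (fun T => u ∈ T ∧ v ∈ T), (g T u + g T v)) * d u v
        ≤ (∑ p : {p : G.Walk u v // p.IsPath}, f u v p.1) * d u v :=
          mul_le_mul_of_nonneg_right (hcon1 u v huv) (hd u v)
      _ = ∑ p : {p : G.Walk u v // p.IsPath}, f u v p.1 * d u v := Finset.sum_mul ..
      _ ≤ ∑ p : {p : G.Walk u v // p.IsPath},
            f u v p.1 * ((p.1.edges.map x).sum + (p.1.support.map y).sum) :=
          Finset.sum_le_sum fun p _ =>
            mul_le_mul_of_nonneg_left (hpath u v p.1 p.2) (hf u v p.1)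
  -- Step 5 : split into the x-part and the y-part
  have step5 : (∑ u : V, ∑ v : V,
      (if u ≤ v then
        ∑ p : {p : G.Walk u v // p.IsPath},
          f u v p.1 * ((p.1.edges.map x).sum + (p.1.support.map y).sum)
       else 0))
      = (∑ u : V, ∑ v : V,
          (if u ≤ v then
            ∑ p : {p : G.Walk u v // p.IsPath}, f u v p.1 * (p.1.support.map y).sum
           else 0))
        + ∑ u : V, ∑ v : V,
          (if u ≤ v then
            ∑ p : {p : G.Walk u v // p.IsPath}, f u v p.1 * (p.1.edges.map x).sum
           else 0) := by
    simp only [← Finset.sum_add_distrib]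
    refine Finset.sum_congr rfl fun u _ => Finset.sum_congr rfl fun v _ => ?_
    split_ifs
    · rw [← Finset.sum_add_distrib]
      exact Finset.sum_congr rfl fun p _ => by ring
    · simp
  -- Step 6 : the y-part is at most ∑ y
  have step6 : (∑ u : V, ∑ v : V,
      (if u ≤ v then
        ∑ p : {p : G.Walk u v // p.IsPath}, f u v p.1 * (p.1.support.map y).sum
       else 0)) ≤ ∑ t : V, y t := by
    have hrw : ∀ u v : V,
        (if u ≤ v then
          ∑ p : {p : G.Walk u v // p.IsPath}, f u v p.1 * (p.1.support.map y).sum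
         else 0)
        = ∑ t : V, (if u ≤ v then
            ∑ p : {p : G.Walk u v // p.IsPath},
              (if t ∈ p.1.support then f u v p.1 else 0) else 0) * y t := by
      intro u v
      by_cases h : u ≤ v
      · simp only [h, if_true]
        calc (∑ p : {p : G.Walk u v // p.IsPath}, f u v p.1 * (p.1.support.map y).sum)
            = ∑ p : {p : G.Walk u v // p.IsPath}, ∑ t : V,
                (if t ∈ p.1.support then f u v p.1 else 0) * y t := by
              refine Finset.sum_congr rfl fun p _ => ?_
              rw [listsum_nodup y _ p.2.support_nodup, Finset.mul_sum]
              exact Finset.sum_congr rfl fun t _ => by split_ifs <;> ring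
          _ = ∑ t : V, ∑ p : {p : G.Walk u v // p.IsPath},
                (if t ∈ p.1.support then f u v p.1 else 0) * y t := Finset.sum_comm
          _ = ∑ t : V, (∑ p : {p : G.Walk u v // p.IsPath},
                (if t ∈ p.1.support then f u v p.1 else 0)) * y t :=
              Finset.sum_congr rfl fun t _ => by rw [Finset.sum_mul]
      · simp [h]
    calc (∑ u : V, ∑ v : V,
        (if u ≤ v then
          ∑ p : {p : G.Walk u v // p.IsPath}, f u v p.1 * (p.1.support.map y).sum
         else 0))
        = ∑ u : V, ∑ v : V, ∑ t : V,
            (if u ≤ v then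
              ∑ p : {p : G.Walk u v // p.IsPath},
                (if t ∈ p.1.support then f u v p.1 else 0) else 0) * y t :=
          Finset.sum_congr rfl fun u _ => Finset.sum_congr rfl fun v _ => hrw u v
      _ = ∑ t : V, ∑ u : V, ∑ v : V,
            (if u ≤ v then
              ∑ p : {p : G.Walk u v // p.IsPath},
                (if t ∈ p.1.support then f u v p.1 else 0) else 0) * y t := by
          rw [show (∑ u : V, ∑ v : V, ∑ t : V,
            (if u ≤ v then
              ∑ p : {p : G.Walk u v // p.IsPath},
                (if t ∈ p.1.support then f u v p.1 else 0) else 0) * y t)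
            = ∑ u : V, ∑ t : V, ∑ v : V,
            (if u ≤ v then
              ∑ p : {p : G.Walk u v // p.IsPath},
                (if t ∈ p.1.support then f u v p.1 else 0) else 0) * y t from
            Finset.sum_congr rfl fun u _ => Finset.sum_comm]
          exact Finset.sum_comm
      _ = ∑ t : V, (∑ u : V, ∑ v : V,
            (if u ≤ v then
              ∑ p : {p : G.Walk u v // p.IsPath},
                (if t ∈ p.1.support then f u v p.1 else 0) else 0)) * y t := by
          simp only [Finset.sum_mul]
      _ ≤ ∑ t : V, 1 * y t :=
          Finset.sum_le_sum fun t _ => mul_le_mul_of_nonneg_right (hcon2 t) (hy t)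
      _ = ∑ t : V, y t := by simp
  -- Assemble
  calc (∑ T ∈ S.powerset, ∑ v ∈ T, g T v * ((T.card : ℝ) - (S.card : ℝ) / 2))
      ≤ ∑ u : V, ∑ v : V, N u v := step1.trans_eq step2
    _ ≤ ∑ u : V, ∑ v : V, if u ≤ v then N u v + N v u else 0 := step3
    _ ≤ ∑ u : V, ∑ v : V,
          (if u ≤ v then
            ∑ p : {p : G.Walk u v // p.IsPath},
              f u v p.1 * ((p.1.edges.map x).sum + (p.1.support.map y).sum)
           else 0) := by
        refine Finset.sum_le_sum fun u _ => Finset.sum_le_sum fun v _ => ?_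
        by_cases h : u ≤ v
        · simpa only [h, if_true] using step4 u v h
        · simp [h]
    _ = _ + _ := step5
    _ ≤ (∑ v : V, y v) + ∑ u : V, ∑ v : V,
          (if u ≤ v then
            ∑ p : {p : G.Walk u v // p.IsPath}, f u v p.1 * (p.1.edges.map x).sum
           else 0) := add_le_add_left step6 _
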